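/- Let ψ₁,…,ψ_k : ℤ → ℂ have periods n₁,…,n_k ∈ ℤ⁺, ψ = ψ₁ + ⋯ + ψ_k, and L = ∑_{∅ ≠ I ⊆ {1,…,k}} (−1)^{|I|−1} gcd(n_s : s ∈ I). If ψ(n) = 0 for all 0 ≤ n < L, then ψ(n) = 0 for all n ∈ ℤ. -/

import Mathlib

open Polynomial Finset

noncomputable def shiftE : Module.End ℂ (ℤ → ℂ) :=
{ toFun := fun f x => f (x + 1),
  map_add' := fun _ _ => rfl,
  map_smul' := fun _ _ => rfl }

lemma shiftE_pow (m : ℕ) (f : ℤ → ℂ) (x : ℤ) : (shiftE ^ m) f x = f (x + m) := by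
  induction m generalizing f x with
  | zero => simp
  | succ m ih =>
    rw [pow_succ, Module.End.mul_apply, ih]
    show f (x + m + 1) = _
    congr 1; push_cast; ring

lemma aeval_shift_apply (P : ℂ[X]) (f : ℤ → ℂ) (x : ℤ) :
    (Polynomial.aeval shiftE P) f x
      = ∑ i ∈ Finset.range (P.natDegree + 1), P.coeff i * f (x + i) := by
  rw [Polynomial.aeval_eq_sum_range]
  simp [LinearMap.sum_apply, shiftE_pow]

lemma rec_zero (f : ℤ → ℂ) (d : ℕ) (c : ℕ → ℂ) (hc0 : c 0 ≠ 0) (hcd : c d ≠ 0)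
    (hrec : ∀ x : ℤ, ∑ i ∈ Finset.range (d + 1), c i * f (x + i) = 0)
    (L : ℤ) (hdL : (d : ℤ) ≤ L) (hzero : ∀ x : ℤ, 0 ≤ x → x < L → f x = 0) :
    ∀ x : ℤ, f x = 0 := by
  have fwd : ∀ m : ℕ, f m = 0 := by
    intro m
    induction m using Nat.strong_induction_on with
    | _ m ih =>
      by_cases hm : (m : ℤ) < L
      · exact hzero m (by positivity) hm
      push_neg at hm
      have hdm : d ≤ m := by exact_mod_cast hdL.trans hm
      have H := hrec ((m : ℤ) - d)
      rw [Finset.sum_range_succ] at H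
      rw [Finset.sum_eq_zero (fun i hi => ?_), zero_add] at H
      · have hfm : f ((m : ℤ) - d + d) = 0 := (mul_eq_zero.mp H).resolve_left hcd
        have : (m : ℤ) - d + d = m := by ring
        rwa [this] at hfm
      · rw [Finset.mem_range] at hi
        have he : ((m : ℤ) - d + i) = ((m - d + i : ℕ) : ℤ) := by push_cast; omega
        rw [he, ih (m - d + i) (by omega), mul_zero]
  have fwd' : ∀ x : ℤ, 0 ≤ x → f x = 0 := by
    intro x hx
    obtain ⟨m, rfl⟩ := Int.eq_ofNat_of_zero_le hx
    exact fwd m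
  have bwd : ∀ m : ℕ, f (-(m : ℤ)) = 0 := by
    intro m
    induction m using Nat.strong_induction_on with
    | _ m ih =>
      rcases Nat.eq_zero_or_pos m with rfl | hm
      · simpa using fwd 0
      have H := hrec (-(m : ℤ))
      rw [Finset.sum_range_succ'] at H
      rw [Finset.sum_eq_zero (fun i hi => ?_)] at H
      · rw [zero_add] at H
        have : f (-(m : ℤ) + (0 : ℕ)) = 0 := (mul_eq_zero.mp H).resolve_left hc0
        simpa using this
      · rcases le_or_gt 0 (-(m : ℤ) + (i + 1 : ℕ)) with h0 | h0
        · rw [fwd' _ h0, mul_zero]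
        · have he : (-(m : ℤ) + (i + 1 : ℕ)) = -((m - (i + 1) : ℕ) : ℤ) := by
            push_cast at h0 ⊢; omega
          rw [he, ih _ (by push_cast at h0; omega), mul_zero]
  intro x
  rcases le_or_gt 0 x with hx | hx
  · exact fwd' x hx
  · have : x = -((x.natAbs : ℕ) : ℤ) := by omega
    rw [this]; exact bwd _

lemma inf'_nthRoots (k : ℕ) (n : Fin k → ℕ) (hn : ∀ s, 0 < n s)
    (I : Finset (Fin k)) (hI : I.Nonempty) :
    I.inf' hI (fun s => Polynomial.nthRootsFinset (n s) (1 : ℂ))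
      = Polynomial.nthRootsFinset (I.gcd n) (1 : ℂ) := by
  have hg : 0 < I.gcd n := by
    rcases hI with ⟨s, hs⟩
    exact Nat.pos_of_ne_zero fun h => (hn s).ne' ((Finset.gcd_eq_zero_iff.mp h) s hs)
  ext z
  rw [Finset.mem_inf']
  constructor
  · intro hz
    rw [Polynomial.mem_nthRootsFinset hg]
    have hord : ∀ s ∈ I, orderOf z ∣ n s := by
      intro s hs
      exact orderOf_dvd_of_pow_eq_one
        ((Polynomial.mem_nthRootsFinset (hn s) 1).mp (hz s hs))
    have : orderOf z ∣ I.gcd n := Finset.dvd_gcd hord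
    exact orderOf_dvd_iff_pow_eq_one.mp this
  · intro hz s hs
    rw [Polynomial.mem_nthRootsFinset (hn s)]
    obtain ⟨m, hm⟩ := Finset.gcd_dvd hs (f := n)
    rw [hm, pow_mul, (Polynomial.mem_nthRootsFinset hg 1).mp hz, one_pow]

lemma card_A (k : ℕ) (n : Fin k → ℕ) (hn : ∀ s, 0 < n s) :
    ((Finset.univ.biUnion (fun s => Polynomial.nthRootsFinset (n s) (1 : ℂ))).card : ℤ)
      = ∑ I ∈ (Finset.univ : Finset (Fin k)).powerset.filter
          (fun I => I.Nonempty), (-1 : ℤ) ^ (I.card - 1) * ((I.gcd n : ℕ) : ℤ) := by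
  rw [Finset.inclusion_exclusion_card_biUnion]
  rw [← Finset.sum_attach ((Finset.univ : Finset (Fin k)).powerset.filter (fun I => I.Nonempty))
      (fun I => (-1 : ℤ) ^ (I.card - 1) * ((I.gcd n : ℕ) : ℤ))]
  apply Finset.sum_congr rfl
  intro t _
  have ht : t.1.Nonempty := (Finset.mem_filter.mp t.2).2
  have hc : 1 ≤ t.1.card := Finset.card_pos.mpr ht
  rw [inf'_nthRoots k n hn t.1 ht]
  have hg : 0 < t.1.gcd n := by
    rcases ht with ⟨s, hs⟩
    exact Nat.pos_of_ne_zero fun h => (hn s).ne' ((Finset.gcd_eq_zero_iff.mp h) s hs)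
  have hcard : (Polynomial.nthRootsFinset (t.1.gcd n) (1 : ℂ)).card = t.1.gcd n :=
    (Complex.isPrimitiveRoot_exp _ hg.ne').card_nthRootsFinset
  rw [hcard]
  congr 1
  have : t.1.card + 1 = (t.1.card - 1) + 2 := by omega
  rw [this, pow_add]
  simp

theorem stmt_9 (k : ℕ) (n : Fin k → ℕ) (hn : ∀ s, 0 < n s)
    (ψ : Fin k → ℤ → ℂ) (hper : ∀ s x, ψ s (x + n s) = ψ s x)
    (L : ℤ)
    (hL : L = ∑ I ∈ (Finset.univ : Finset (Fin k)).powerset.filter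
        (fun I => I.Nonempty), (-1 : ℤ) ^ (I.card - 1) * ((I.gcd n : ℕ) : ℤ))
    (h : ∀ x : ℤ, 0 ≤ x → x < L → ∑ s, ψ s x = 0) :
    ∀ x : ℤ, ∑ s, ψ s x = 0 := by
  classical
  set A : Finset ℂ := Finset.univ.biUnion (fun s => Polynomial.nthRootsFinset (n s) (1 : ℂ)) with hA
  set Q : ℂ[X] := ∏ z ∈ A, (X - C z) with hQ
  have hmonic : Q.Monic := Polynomial.monic_prod_of_monic _ _ (fun z _ => monic_X_sub_C z)
  have hdeg : Q.natDegree = A.card := by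
    rw [hQ, Polynomial.natDegree_prod _ _ (fun z _ => X_sub_C_ne_zero z)]
    simp
  have hzA : ∀ z ∈ A, z ≠ 0 := by
    intro z hz
    rw [hA, Finset.mem_biUnion] at hz
    obtain ⟨s, _, hz⟩ := hz
    rw [Polynomial.mem_nthRootsFinset (hn s)] at hz
    intro h0; rw [h0, zero_pow (hn s).ne'] at hz; exact zero_ne_one hz
  have hc0 : Q.coeff 0 ≠ 0 := by
    rw [Polynomial.coeff_zero_eq_eval_zero, hQ, Polynomial.eval_prod]
    rw [Finset.prod_ne_zero_iff]
    intro z hz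
    simp only [eval_sub, eval_X, eval_C, zero_sub, neg_ne_zero]
    exact hzA z hz
  have hdvd : ∀ s, (X ^ (n s) - 1 : ℂ[X]) ∣ Q := by
    intro s
    rw [Polynomial.X_pow_sub_one_eq_prod (hn s) (Complex.isPrimitiveRoot_exp _ (hn s).ne'), hQ, hA]
    exact Finset.prod_dvd_prod_of_subset _ _ _
      (Finset.subset_biUnion_of_mem (fun s => Polynomial.nthRootsFinset (n s) (1 : ℂ))
        (Finset.mem_univ s))
  have hann : ∀ s, (Polynomial.aeval shiftE (X ^ (n s) - 1 : ℂ[X])) (ψ s) = 0 := by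
    intro s
    rw [map_sub, map_one, map_pow, Polynomial.aeval_X]
    funext x
    show (shiftE ^ (n s)) (ψ s) x - ψ s x = 0
    rw [shiftE_pow, hper s x, sub_self]
  have hannQ : ∀ s, (Polynomial.aeval shiftE Q) (ψ s) = 0 := by
    intro s
    obtain ⟨R, hR⟩ := hdvd s
    rw [hR, mul_comm, map_mul, Module.End.mul_apply, hann s, map_zero]
  set f : ℤ → ℂ := ∑ s, ψ s with hf
  have hfx : ∀ x : ℤ, f x = ∑ s, ψ s x := by
    intro x; rw [hf]; simp
  have hQf : (Polynomial.aeval shiftE Q) f = 0 := by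
    rw [hf, map_sum]
    exact Finset.sum_eq_zero fun s _ => hannQ s
  have hrec : ∀ x : ℤ, ∑ i ∈ Finset.range (Q.natDegree + 1), Q.coeff i * f (x + i) = 0 := by
    intro x
    rw [← aeval_shift_apply, hQf]
    rfl
  have hLA : L = (A.card : ℤ) := by rw [hL, card_A k n hn]
  have hall : ∀ x : ℤ, f x = 0 := by
    refine rec_zero f Q.natDegree Q.coeff hc0 ?_ hrec L ?_ ?_
    · rw [hmonic.coeff_natDegree]; exact one_ne_zero
    · rw [hLA, hdeg]
    · intro x hx hxL
      rw [hfx]; exact h x hx hxL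
  intro x
  rw [← hfx]; exact hall x
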